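/- Let A ∈ ℝ^{m×n}, b ∈ ℝ^m, p ≥ 1, θ_p > 0, and define f(x) = (1/2)‖Ax − b‖² + (θ_p/p)∑_{i=1}^n |x_i|^p and φ(x) = (1/2)‖x‖² + (1/p)∑_{i=1}^n |x_i|^p on ℝⁿ. Then for any L ≥ λ_max(AᵀA) + θ_p (where λ_max denotes the largest eigenvalue), both Lφ − f and Lφ + f are convex on ℝⁿ. -/

import Mathlib

open Set Matrix

section Stmt12Aux

/-- 1-d convexity of `t ↦ |t| ^ p` for `1 ≤ p`. -/
lemma stmt12_abs_rpow_convex {p : ℝ} (hp : 1 ≤ p) :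
    ConvexOn ℝ Set.univ (fun t : ℝ => |t| ^ p) := by
  have habs : ConvexOn ℝ (Set.univ : Set ℝ) (fun t : ℝ => |t|) := by
    refine ⟨convex_univ, fun x _ y _ a c ha hc hac => ?_⟩
    simp only [smul_eq_mul]
    calc |a * x + c * y| ≤ |a * x| + |c * y| := abs_add_le _ _
      _ = a * |x| + c * |y| := by rw [abs_mul, abs_mul, abs_of_nonneg ha, abs_of_nonneg hc]
  have himg : (fun t : ℝ => |t|) '' Set.univ = Set.Ici 0 := by
    rw [Set.image_univ]
    ext t
    simp only [Set.mem_range, Set.mem_Ici]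
    constructor
    · rintro ⟨s, rfl⟩; exact abs_nonneg s
    · intro ht; exact ⟨t, abs_of_nonneg ht⟩
  have hrpow : ConvexOn ℝ ((fun t : ℝ => |t|) '' Set.univ) (fun t : ℝ => t ^ p) := by
    rw [himg]; exact convexOn_rpow hp
  have hmono : MonotoneOn (fun t : ℝ => t ^ p) ((fun t : ℝ => |t|) '' Set.univ) := by
    rw [himg]
    intro a ha b hb hab
    exact Real.rpow_le_rpow ha hab (le_trans zero_le_one hp)
  exact hrpow.comp habs hmono

lemma stmt12_sum_abs_rpow_convex {n : ℕ} {p : ℝ} (hp : 1 ≤ p) :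
    ConvexOn ℝ Set.univ (fun x : Fin n → ℝ => ∑ i, |x i| ^ p) := by
  refine ⟨convex_univ, fun x _ y _ a c ha hc hac => ?_⟩
  have h1 := stmt12_abs_rpow_convex hp
  calc ∑ i, |(a • x + c • y) i| ^ p ≤ ∑ i, (a * |x i| ^ p + c * |y i| ^ p) := by
        refine Finset.sum_le_sum fun i _ => ?_
        have := h1.2 (Set.mem_univ (x i)) (Set.mem_univ (y i)) ha hc hac
        simpa using this
    _ = a * ∑ i, |x i| ^ p + c * ∑ i, |y i| ^ p := by
        rw [Finset.sum_add_distrib, Finset.mul_sum, Finset.mul_sum]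

/-- algebraic identity for quadratic sums -/
lemma stmt12_quad_identity {k : ℕ} (f g : Fin k → ℝ) (a c : ℝ) (hac : a + c = 1) :
    a * ∑ i, f i ^ 2 + c * ∑ i, g i ^ 2 - ∑ i, (a * f i + c * g i) ^ 2
      = a * c * ∑ i, (f i - g i) ^ 2 := by
  have : ∀ i : Fin k, a * f i ^ 2 + c * g i ^ 2 - (a * f i + c * g i) ^ 2
      = a * c * (f i - g i) ^ 2 := by
    intro i
    have hc : c = 1 - a := by linarith
    subst hc; ring
  calc a * ∑ i, f i ^ 2 + c * ∑ i, g i ^ 2 - ∑ i, (a * f i + c * g i) ^ 2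
      = ∑ i, (a * f i ^ 2 + c * g i ^ 2 - (a * f i + c * g i) ^ 2) := by
        rw [Finset.sum_sub_distrib, Finset.sum_add_distrib, Finset.mul_sum, Finset.mul_sum]
    _ = ∑ i, a * c * (f i - g i) ^ 2 := Finset.sum_congr rfl fun i _ => this i
    _ = a * c * ∑ i, (f i - g i) ^ 2 := by rw [Finset.mul_sum]

/-- Convexity of `x ↦ L‖x‖² − s‖Ax − b‖²` given `s‖Az‖² ≤ L‖z‖²` for all `z`. -/
lemma stmt12_quad_convex {m n : ℕ} (A : Matrix (Fin m) (Fin n) ℝ) (b : Fin m → ℝ) (L s : ℝ)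
    (h : ∀ z : Fin n → ℝ, s * ∑ i, (A.mulVec z i) ^ 2 ≤ L * ∑ i, z i ^ 2) :
    ConvexOn ℝ Set.univ (fun x : Fin n → ℝ =>
      L * ∑ i, x i ^ 2 - s * ∑ i, (A.mulVec x i - b i) ^ 2) := by
  refine ⟨convex_univ, fun x _ y _ a c ha hc hac => ?_⟩
  simp only [smul_eq_mul]
  have hxy : ∀ i, (a • x + c • y) i = a * x i + c * y i := fun i => rfl
  have hmv : ∀ i, A.mulVec (a • x + c • y) i - b i
      = a * (A.mulVec x i - b i) + c * (A.mulVec y i - b i) := by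
    intro i
    rw [Matrix.mulVec_add, Matrix.mulVec_smul, Matrix.mulVec_smul]
    simp only [Pi.add_apply, Pi.smul_apply, smul_eq_mul]
    linear_combination (b i) * hac
  have e1 : ∑ i, ((a • x + c • y) i) ^ 2 = ∑ i, (a * x i + c * y i) ^ 2 :=
    Finset.sum_congr rfl fun i _ => by rw [hxy]
  have e2 : ∑ i, (A.mulVec (a • x + c • y) i - b i) ^ 2
      = ∑ i, (a * (A.mulVec x i - b i) + c * (A.mulVec y i - b i)) ^ 2 :=
    Finset.sum_congr rfl fun i _ => by rw [hmv]
  have k1 := stmt12_quad_identity x y a c hac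
  have k2 := stmt12_quad_identity (fun i => A.mulVec x i - b i)
    (fun i => A.mulVec y i - b i) a c hac
  have hz := h (x - y)
  have hmvsub : ∀ i, A.mulVec (x - y) i = (A.mulVec x i - b i) - (A.mulVec y i - b i) := by
    intro i; rw [Matrix.mulVec_sub]; simp [Pi.sub_apply]
  have hz' : s * ∑ i, ((A.mulVec x i - b i) - (A.mulVec y i - b i)) ^ 2
      ≤ L * ∑ i, (x i - y i) ^ 2 := by
    have e3 : ∑ i, (A.mulVec (x - y) i) ^ 2
        = ∑ i, ((A.mulVec x i - b i) - (A.mulVec y i - b i)) ^ 2 :=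
      Finset.sum_congr rfl fun i _ => by rw [hmvsub]
    have e4 : ∑ i, ((x - y) i) ^ 2 = ∑ i, (x i - y i) ^ 2 := rfl
    rw [e3, e4] at hz
    exact hz
  rw [e1, e2]
  have hmm := mul_le_mul_of_nonneg_left hz' (mul_nonneg ha hc)
  have k1' : L * (a * ∑ i, x i ^ 2 + c * ∑ i, y i ^ 2 - ∑ i, (a * x i + c * y i) ^ 2)
      = L * (a * c * ∑ i, (x i - y i) ^ 2) := by rw [k1]
  have k2' : s * (a * ∑ i, (A.mulVec x i - b i) ^ 2 + c * ∑ i, (A.mulVec y i - b i) ^ 2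
        - ∑ i, (a * (A.mulVec x i - b i) + c * (A.mulVec y i - b i)) ^ 2)
      = s * (a * c * ∑ i, ((A.mulVec x i - b i) - (A.mulVec y i - b i)) ^ 2) := by rw [k2]
  linarith [hmm, k1', k2']

/-- Rayleigh-quotient bound: `‖Az‖² ≤ λ_max(AᵀA) ‖z‖²`. -/
lemma stmt12_spec_bound {m n : ℕ} (A : Matrix (Fin m) (Fin n) ℝ) (hAA : (Aᵀ * A).IsHermitian)
    (z : Fin n → ℝ) :
    ∑ i, (A.mulVec z i) ^ 2 ≤ (⨆ i, hAA.eigenvalues i) * ∑ i, z i ^ 2 := by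
  set U : Matrix (Fin n) (Fin n) ℝ := (hAA.eigenvectorUnitary : Matrix (Fin n) (Fin n) ℝ) with hU
  set μ : Fin n → ℝ := hAA.eigenvalues with hμ
  set w : Fin n → ℝ := star U *ᵥ z with hw
  have hUunit : U * star U = 1 := (Matrix.mem_unitaryGroup_iff).mp (hAA.eigenvectorUnitary).2
  have stepA : ∑ i, (A.mulVec z i) ^ 2 = z ⬝ᵥ ((Aᵀ * A) *ᵥ z) := by
    rw [← Matrix.mulVec_mulVec, Matrix.dotProduct_mulVec, Matrix.vecMul_transpose]
    simp [dotProduct, pow_two]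
  have hspec : Aᵀ * A = U * Matrix.diagonal μ * star U := by
    have := hAA.spectral_theorem
    simpa using this
  have hdot : ∀ y : Fin n → ℝ, z ⬝ᵥ (U *ᵥ y) = w ⬝ᵥ y := by
    intro y
    rw [Matrix.dotProduct_mulVec, hw, Matrix.star_eq_conjTranspose,
      Matrix.conjTranspose_eq_transpose_of_trivial, Matrix.mulVec_transpose]
  have stepB : z ⬝ᵥ ((Aᵀ * A) *ᵥ z) = ∑ i, μ i * w i ^ 2 := by
    rw [hspec, ← Matrix.mulVec_mulVec, ← Matrix.mulVec_mulVec, hdot, ← hw]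
    simp only [dotProduct, Matrix.mulVec_diagonal]
    exact Finset.sum_congr rfl fun i _ => by ring
  have stepC : ∑ i, z i ^ 2 = ∑ i, w i ^ 2 := by
    have : w ⬝ᵥ w = z ⬝ᵥ z := by
      calc w ⬝ᵥ w = z ⬝ᵥ (U *ᵥ w) := (hdot w).symm
        _ = z ⬝ᵥ ((U * star U) *ᵥ z) := by rw [hw, Matrix.mulVec_mulVec]
        _ = z ⬝ᵥ z := by rw [hUunit, Matrix.one_mulVec]
    have h1 : w ⬝ᵥ w = ∑ i, w i ^ 2 := by simp [dotProduct, pow_two]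
    have h2 : z ⬝ᵥ z = ∑ i, z i ^ 2 := by simp [dotProduct, pow_two]
    rw [← h1, ← h2, this]
  rw [stepA, stepB, stepC, Finset.mul_sum]
  refine Finset.sum_le_sum fun i _ => ?_
  exact mul_le_mul_of_nonneg_right
    (le_ciSup (Set.Finite.bddAbove (Set.finite_range μ)) i) (sq_nonneg _)

lemma stmt12_congr {n : ℕ} {f g : (Fin n → ℝ) → ℝ} (hf : ConvexOn ℝ Set.univ f)
    (h : ∀ x, f x = g x) : ConvexOn ℝ Set.univ g := by
  have : f = g := funext h
  exact this ▸ hf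

end Stmt12Aux

/-- the L-smad property for the ℓ_p regularized least squares
problem: both `Lφ − f` and `Lφ + f` are convex whenever
`L ≥ λ_max(AᵀA) + θ_p`. -/
theorem stmt12 {m n : ℕ} (A : Matrix (Fin m) (Fin n) ℝ) (b : Fin m → ℝ)
    (p θp : ℝ) (hp : 1 ≤ p) (hθp : 0 < θp)
    (hAA : (Aᵀ * A).IsHermitian)
    (L : ℝ) (hL : (⨆ i, hAA.eigenvalues i) + θp ≤ L) :
    ConvexOn ℝ Set.univ (fun x : Fin n → ℝ =>
      L * ((1 / 2) * ∑ i, x i ^ 2 + (1 / p) * ∑ i, |x i| ^ p) -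
      ((1 / 2) * ∑ i, (A.mulVec x i - b i) ^ 2 + (θp / p) * ∑ i, |x i| ^ p)) ∧
    ConvexOn ℝ Set.univ (fun x : Fin n → ℝ =>
      L * ((1 / 2) * ∑ i, x i ^ 2 + (1 / p) * ∑ i, |x i| ^ p) +
      ((1 / 2) * ∑ i, (A.mulVec x i - b i) ^ 2 + (θp / p) * ∑ i, |x i| ^ p)) := by
  have hpsd : (Aᵀ * A).PosSemidef := by
    have := Matrix.posSemidef_conjTranspose_mul_self A
    rwa [Matrix.conjTranspose_eq_transpose_of_trivial] at this
  have hlam0 : 0 ≤ ⨆ i, hAA.eigenvalues i := by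
    rcases isEmpty_or_nonempty (Fin n) with h | h
    · rw [iSup_of_empty', Real.sSup_empty]
    · exact le_trans (hpsd.eigenvalues_nonneg (Classical.arbitrary _))
        (le_ciSup (Set.Finite.bddAbove (Set.finite_range _)) _)
  have hL0 : 0 ≤ L := by linarith
  have hp0 : 0 < p := lt_of_lt_of_le one_pos hp
  have hs := stmt12_sum_abs_rpow_convex (n := n) hp
  -- minus case quadratic
  have hA1 : ∀ z : Fin n → ℝ, (1 : ℝ) * ∑ i, (A.mulVec z i) ^ 2 ≤ L * ∑ i, z i ^ 2 := by
    intro z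
    rw [one_mul]
    refine le_trans (stmt12_spec_bound A hAA z) ?_
    exact mul_le_mul_of_nonneg_right (by linarith)
      (Finset.sum_nonneg fun i _ => sq_nonneg _)
  have hq1 := stmt12_quad_convex A b L 1 hA1
  -- plus case quadratic
  have hA2 : ∀ z : Fin n → ℝ, (-1 : ℝ) * ∑ i, (A.mulVec z i) ^ 2 ≤ L * ∑ i, z i ^ 2 := by
    intro z
    have h1 : (-1 : ℝ) * ∑ i, (A.mulVec z i) ^ 2 ≤ 0 := by
      have := Finset.sum_nonneg (fun i (_ : i ∈ Finset.univ) => sq_nonneg (A.mulVec z i))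
      linarith
    exact le_trans h1 (mul_nonneg hL0 (Finset.sum_nonneg fun i _ => sq_nonneg _))
  have hq2 := stmt12_quad_convex A b L (-1) hA2
  have hc1 : (0 : ℝ) ≤ (L - θp) / p := by
    apply div_nonneg _ (le_of_lt hp0)
    linarith
  have hc2 : (0 : ℝ) ≤ (L + θp) / p := by
    apply div_nonneg _ (le_of_lt hp0)
    linarith
  constructor
  · refine stmt12_congr ((hq1.smul (by norm_num : (0:ℝ) ≤ 1/2)).add (hs.smul hc1)) ?_
    intro x
    simp only [Pi.add_apply, Pi.smul_apply, smul_eq_mul]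
    ring
  · refine stmt12_congr ((hq2.smul (by norm_num : (0:ℝ) ≤ 1/2)).add (hs.smul hc2)) ?_
    intro x
    simp only [Pi.add_apply, Pi.smul_apply, smul_eq_mul]
    ring
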